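/- Let S ∈ ℝ^{n×n} and β ∈ ℝⁿ with (Sᵀ, β) controllable, and set Λ = S − 𝟙_n βᵀ, where 𝟙_n is the all-ones vector. Let A^u ∈ ℝ^{nᵘ×nᵘ} be a matrix whose characteristic polynomial divides the characteristic polynomial of S, and let C^u ∈ ℝ^{1×nᵘ} be a row vector. Then there exists a matrix G ∈ ℝ^{n×nᵘ} such that G A^u − 𝟙_n C^u A^u = Λ G and βᵀ G = C^u A^u. -/

import Mathlib

open Matrix Polynomial

/-- A pair `(X, p)` is controllable if `p, Xp, …, X^{n−1}p` span the whole space. -/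
def Controllable {n : ℕ} (X : Matrix (Fin n) (Fin n) ℝ) (p : Fin n → ℝ) : Prop :=
  Submodule.span ℝ (Set.range fun i : Fin n => (X ^ (i : ℕ)) *ᵥ p) = ⊤

private lemma vecMul_smul_right {m k : ℕ} (v : Fin m → ℝ) (c : ℝ)
    (M : Matrix (Fin m) (Fin k) ℝ) : v ᵥ* (c • M) = c • (v ᵥ* M) := by
  ext j
  simp [Matrix.vecMul, dotProduct, Finset.mul_sum, mul_left_comm]

private lemma vecMul_sum_right {m k : ℕ} (v : Fin m → ℝ) (s : Finset ℕ)
    (f : ℕ → Matrix (Fin m) (Fin k) ℝ) :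
    v ᵥ* (∑ i ∈ s, f i) = ∑ i ∈ s, v ᵥ* f i := by
  classical
  induction s using Finset.induction with
  | empty => simp [Matrix.vecMul, dotProduct]
  | insert a s h ih => simp [Finset.sum_insert h, Matrix.vecMul_add, ih]

private lemma row_mul {m k l : ℕ} (A : Matrix (Fin m) (Fin l) ℝ)
    (B : Matrix (Fin l) (Fin k) ℝ) (i : Fin m) : (A * B) i = A i ᵥ* B := by
  ext j
  simp [Matrix.mul_apply, Matrix.vecMul, dotProduct]

theorem exists_G_intertwiner {n nu : ℕ}
    (S : Matrix (Fin n) (Fin n) ℝ) (β : Fin n → ℝ)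
    (hctrb : Controllable Sᵀ β)
    (Λ : Matrix (Fin n) (Fin n) ℝ)
    (hΛ : Λ = S - vecMulVec (fun _ => (1 : ℝ)) β)
    (Au : Matrix (Fin nu) (Fin nu) ℝ)
    (hdvd : Au.charpoly ∣ S.charpoly)
    (Cu : Fin nu → ℝ) :
    ∃ G : Matrix (Fin n) (Fin nu) ℝ,
      G * Au - vecMulVec (fun _ => (1 : ℝ)) Cu * Au = Λ * G ∧
      β ᵥ* G = Cu ᵥ* Au := by
  classical
  have hS0 : S.charpoly ≠ 0 := S.charpoly_monic.ne_zero
  rcases Nat.eq_zero_or_pos n with hn | hn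
  · -- degenerate case: n = 0 forces nu = 0
    have hnu : nu = 0 := by
      have h1 := Polynomial.natDegree_le_of_dvd hdvd hS0
      rw [Matrix.charpoly_natDegree_eq_dim, Matrix.charpoly_natDegree_eq_dim] at h1
      simpa [hn] using h1
    refine ⟨0, ?_, ?_⟩
    · ext i j; exact absurd i.isLt (by omega)
    · funext j; exact absurd j.isLt (by omega)
  -- main case: the controllability (Krylov) matrix K
  set K : Matrix (Fin n) (Fin n) ℝ :=
    Matrix.of (fun i : Fin n => β ᵥ* S ^ (i : ℕ)) with hK
  have hKrow : ∀ i : Fin n, K i = β ᵥ* S ^ (i : ℕ) := fun _ => rfl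
  have hKunit : IsUnit K := by
    rw [← Matrix.vecMul_surjective_iff_isUnit]
    have hr : LinearMap.range K.vecMulLinear = ⊤ := by
      rw [range_vecMulLinear]
      have hfun : K = fun i : Fin n => (Sᵀ ^ (i : ℕ)) *ᵥ β := by
        funext i
        rw [hKrow, ← Matrix.transpose_pow, Matrix.mulVec_transpose]
      have hrange : Set.range K = Set.range fun i : Fin n => (Sᵀ ^ (i : ℕ)) *ᵥ β := by
        rw [hfun]
      rw [show K.row = K from rfl, hrange]
      exact hctrb
    intro y
    obtain ⟨x, hx⟩ := LinearMap.range_eq_top.mp hr y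
    exact ⟨x, hx⟩
  have hKdet : IsUnit K.det := (Matrix.isUnit_iff_isUnit_det K).mp hKunit
  set H : Matrix (Fin n) (Fin nu) ℝ :=
    Matrix.of (fun i : Fin n => Cu ᵥ* Au ^ ((i : ℕ) + 1)) with hH
  set G : Matrix (Fin n) (Fin nu) ℝ := K⁻¹ * H with hG
  have hKG : K * G = H := by
    rw [hG, ← Matrix.mul_assoc, Matrix.mul_nonsing_inv K hKdet, Matrix.one_mul]
  -- the key identity for small exponents
  have keyFin : ∀ m : ℕ, m < n → β ᵥ* (S ^ m * G) = Cu ᵥ* Au ^ (m + 1) := by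
    intro m hm
    have h1 : β ᵥ* (S ^ m * G) = (β ᵥ* S ^ m) ᵥ* G := (Matrix.vecMul_vecMul β (S ^ m) G).symm
    rw [h1, ← hKrow ⟨m, hm⟩, ← row_mul, hKG]
    rfl
  -- charpoly S kills Au as well
  have hAu0 : aeval Au S.charpoly = 0 := by
    obtain ⟨c, hc⟩ := hdvd
    rw [hc, _root_.map_mul, Matrix.aeval_self_charpoly, zero_mul]
  -- the key identity for all exponents
  have key : ∀ m : ℕ, β ᵥ* (S ^ m * G) = Cu ᵥ* Au ^ (m + 1) := by
    intro m
    set p : ℝ[X] := (X : ℝ[X]) ^ m %ₘ S.charpoly with hp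
    have hchar1 : S.charpoly ≠ 1 := by
      intro h
      have := Matrix.charpoly_natDegree_eq_dim S
      rw [h] at this
      simp [Fintype.card_fin] at this
      omega
    have hdeg : p.natDegree < n := by
      have := Polynomial.natDegree_modByMonic_lt ((X : ℝ[X]) ^ m) S.charpoly_monic hchar1
      rwa [Matrix.charpoly_natDegree_eq_dim, Fintype.card_fin] at this
    have hdecomp : ∀ {N : ℕ} (M : Matrix (Fin N) (Fin N) ℝ),
        aeval M S.charpoly = 0 → M ^ m = aeval M p := by
      intro N M hM
      have := congrArg (aeval M) (Polynomial.modByMonic_add_div ((X : ℝ[X]) ^ m)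
        S.charpoly)
      rw [map_add, _root_.map_mul, hM, zero_mul, add_zero, map_pow, aeval_X] at this
      exact this.symm
    have hSm : S ^ m = aeval S p := hdecomp S (Matrix.aeval_self_charpoly S)
    have hAum : Au ^ m = aeval Au p := hdecomp Au hAu0
    rw [hSm, pow_succ', hAum]
    rw [Polynomial.aeval_eq_sum_range' hdeg S, Polynomial.aeval_eq_sum_range' hdeg Au]
    rw [Matrix.sum_mul, Matrix.mul_sum]
    rw [vecMul_sum_right, vecMul_sum_right]
    refine Finset.sum_congr rfl fun i hi => ?_
    rw [Finset.mem_range] at hi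
    rw [Matrix.smul_mul, Matrix.mul_smul, vecMul_smul_right, vecMul_smul_right,
      keyFin i hi, pow_succ']
  -- conclusion 2
  have hβG : β ᵥ* G = Cu ᵥ* Au := by
    have := key 0
    simpa using this
  -- S * G = G * Au
  have hrows : K * (S * G) = K * (G * Au) := by
    funext i j
    have lhs : (K * (S * G)) i = Cu ᵥ* Au ^ ((i : ℕ) + 2) := by
      rw [row_mul, hKrow, Matrix.vecMul_vecMul, ← Matrix.mul_assoc, ← pow_succ,
        key ((i : ℕ) + 1)]
    have rhs : (K * (G * Au)) i = Cu ᵥ* Au ^ ((i : ℕ) + 2) := by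
      rw [row_mul, hKrow, Matrix.vecMul_vecMul, ← Matrix.mul_assoc,
        show S ^ (i : ℕ) * G * Au = (S ^ (i : ℕ) * G) * Au from rfl,
        ← Matrix.vecMul_vecMul, key (i : ℕ), Matrix.vecMul_vecMul, ← pow_succ]
    rw [congrFun lhs j, congrFun rhs j]
  have hSG : S * G = G * Au := by
    have h2 := congrArg (fun M => K⁻¹ * M) hrows
    simpa [← Matrix.mul_assoc, Matrix.nonsing_inv_mul K hKdet] using h2
  refine ⟨G, ?_, hβG⟩
  -- conclusion 1
  have hvv : vecMulVec (fun _ : Fin n => (1 : ℝ)) β * G =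
      vecMulVec (fun _ : Fin n => (1 : ℝ)) Cu * Au := by
    ext i j
    simp only [Matrix.mul_apply, Matrix.vecMulVec_apply, one_mul]
    have h1 := congrFun hβG j
    simpa [Matrix.vecMul, dotProduct] using h1
  rw [hΛ, Matrix.sub_mul, hSG, hvv]
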